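/- Let S be a commutative semigroup with zero and G = Γ(S). Suppose there exist adjacent vertices a, b, a vertex s with N(s) = {a,b}, and a vertex z with d(s,z) = 3. Then {0, a, b} is an ideal of S. -/

import Mathlib

/-- A zero-divisor: a nonzero element annihilated by some nonzero element. -/
def IsZeroDivisorElem {S : Type*} [Mul S] [Zero S] (x : S) : Prop :=
  x ≠ 0 ∧ ∃ y : S, y ≠ 0 ∧ x * y = 0

/-- The zero-divisor graph Γ(S) of a commutative semigroup with zero:
vertices are the nonzero zero-divisors, two distinct vertices adjacent iff their product is 0. -/
def zdGraph (S : Type*) [CommSemigroup S] [Zero S] :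
    SimpleGraph {x : S // IsZeroDivisorElem x} where
  Adj a b := a ≠ b ∧ (a : S) * (b : S) = 0
  symm := by
    constructor
    rintro a b ⟨h1, h2⟩
    exact ⟨h1.symm, by rwa [mul_comm] at h2⟩
  loopless := by constructor; rintro a ⟨h, _⟩; exact h rfl

/-- An end vertex: a vertex of degree one (exactly one neighbor). -/
def IsEndVertex {V : Type*} (G : SimpleGraph V) (v : V) : Prop :=
  ∃! u, G.Adj v u

/-- An internal vertex: degree ≥ 2 and no neighbor of degree 1. -/
def IsInternal {V : Type*} (G : SimpleGraph V) (v : V) : Prop :=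
  (∃ u, G.Adj v u) ∧ ¬ IsEndVertex G v ∧ ∀ u, G.Adj v u → ¬ IsEndVertex G u

/-- C(a,b): the elements of S that are vertices whose neighborhood is exactly {a, b}. -/
def cSet (S : Type*) [CommSemigroup S] [Zero S]
    (a b : {x : S // IsZeroDivisorElem x}) : Set S :=
  {x : S | ∃ h : IsZeroDivisorElem x, (zdGraph S).neighborSet ⟨x, h⟩ = {a, b}}

/-- T_a: the elements of S that are end vertices adjacent to the vertex a. -/
def tSet (S : Type*) [CommSemigroup S] [Zero S]
    (a : {x : S // IsZeroDivisorElem x}) : Set S :=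
  {x : S | ∃ h : IsZeroDivisorElem x,
    (zdGraph S).Adj ⟨x, h⟩ a ∧ IsEndVertex (zdGraph S) ⟨x, h⟩}

private lemma key {S : Type*} [CommSemigroup S] [Zero S] (hz : ∀ x : S, 0 * x = 0)
    (a b s z : {t : S // IsZeroDivisorElem t})
    (hs : (zdGraph S).neighborSet s = {a, b})
    (hd : (zdGraph S).dist s z = 3) (t : S) :
    (a : S) * t = 0 ∨ (a : S) * t = a ∨ (a : S) * t = b := by
  have hmem : ∀ v, (zdGraph S).Adj s v ↔ v = a ∨ v = b := by
    intro v
    rw [← SimpleGraph.mem_neighborSet, hs]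
    simp [Set.mem_insert_iff]
  have hsa : (zdGraph S).Adj s a := (hmem a).2 (Or.inl rfl)
  have hsb : (zdGraph S).Adj s b := (hmem b).2 (Or.inr rfl)
  have s0 : (s : S) ≠ 0 := s.2.1
  have hsat : (s : S) * ((a : S) * t) = 0 := by
    rw [← mul_assoc, hsa.2, hz]
  by_cases hat0 : (a : S) * t = 0
  · exact Or.inl hat0
  have hvz : IsZeroDivisorElem ((a : S) * t) :=
    ⟨hat0, s, s0, by rwa [mul_comm]⟩
  set v : {x : S // IsZeroDivisorElem x} := ⟨(a : S) * t, hvz⟩ with hvdef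
  by_cases hvs : v = s
  · -- at = s, derive contradiction
    exfalso
    have hats : (a : S) * t = (s : S) := congrArg Subtype.val hvs
    have hss : (s : S) * (s : S) = 0 := by rw [hats] at hsat; exact hsat
    -- get a walk of length 3
    obtain ⟨w, hw⟩ := (zdGraph S).exists_walk_of_dist_ne_zero (by rw [hd]; omega)
    rw [hd] at hw
    -- destructure the walk
    match w, hw with
    | SimpleGraph.Walk.cons (v := p) h1 (SimpleGraph.Walk.cons (v := q) h2 (SimpleGraph.Walk.cons h3 SimpleGraph.Walk.nil)), _ =>
      -- h1 : Adj s p, h2 : Adj p q, h3 : Adj q z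
      have hqs : q ≠ s := by
        intro hq
        rw [hq] at h3
        have : (zdGraph S).dist s z ≤ 1 :=
          (zdGraph S).dist_le (SimpleGraph.Walk.cons h3 SimpleGraph.Walk.nil)
        omega
      have hnadj : ¬ (zdGraph S).Adj s q := by
        intro hadj
        have : (zdGraph S).dist s z ≤ 2 :=
          (zdGraph S).dist_le (SimpleGraph.Walk.cons hadj (SimpleGraph.Walk.cons h3 SimpleGraph.Walk.nil))
        omega
      have hsq0 : (s : S) * (q : S) ≠ 0 := fun h0 => hnadj ⟨Ne.symm hqs, h0⟩
      have hsu : (s : S) * ((s : S) * (q : S)) = 0 := by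
        rw [← mul_assoc, hss, hz]
      have huz : IsZeroDivisorElem ((s : S) * (q : S)) :=
        ⟨hsq0, s, s0, by rwa [mul_comm]⟩
      have hzs : z ≠ s := by
        rintro rfl
        rw [SimpleGraph.dist_self] at hd
        omega
      by_cases hus : (⟨(s : S) * (q : S), huz⟩ : {x : S // IsZeroDivisorElem x}) = s
      · have heq : (s : S) * (q : S) = (s : S) := congrArg Subtype.val hus
        have hsz : (s : S) * (z : S) = 0 := by
          rw [← heq, mul_assoc, h3.2, mul_comm, hz]
        have : (zdGraph S).dist s z ≤ 1 :=
          (zdGraph S).dist_le (SimpleGraph.Walk.cons ⟨Ne.symm hzs, hsz⟩ SimpleGraph.Walk.nil)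
        omega
      · have hadj : (zdGraph S).Adj s ⟨(s : S) * (q : S), huz⟩ := ⟨fun h => hus h.symm, hsu⟩
        have hcz : ((s : S) * (q : S)) * (z : S) = 0 := by
          rw [mul_assoc, h3.2, mul_comm, hz]
        have hub := (hmem _).1 hadj
        have hex : ∃ c, ((zdGraph S).Adj s c) ∧ (c : S) * (z : S) = 0 := by
          rcases hub with h | h
          · exact ⟨a, hsa, by rw [← congrArg Subtype.val h]; exact hcz⟩
          · exact ⟨b, hsb, by rw [← congrArg Subtype.val h]; exact hcz⟩
        obtain ⟨c, hsc, hcz0⟩ := hex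
        have hzc : z ≠ c := by
          rintro rfl
          have : (zdGraph S).dist s z ≤ 1 :=
            (zdGraph S).dist_le (SimpleGraph.Walk.cons hsc SimpleGraph.Walk.nil)
          omega
        have : (zdGraph S).dist s z ≤ 2 :=
          (zdGraph S).dist_le (SimpleGraph.Walk.cons hsc
            (SimpleGraph.Walk.cons ⟨Ne.symm hzc, hcz0⟩ SimpleGraph.Walk.nil))
        omega
  · have hadj : (zdGraph S).Adj s v := ⟨fun h => hvs h.symm, hsat⟩
    rcases (hmem v).1 hadj with h | h
    · exact Or.inr (Or.inl (congrArg Subtype.val h))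
    · exact Or.inr (Or.inr (congrArg Subtype.val h))

/-- Under condition (△), {0, a, b} is an ideal of S. -/
theorem stmt6 {S : Type*} [CommSemigroup S] [Zero S] (hz : ∀ x : S, 0 * x = 0)
    (a b s z : {t : S // IsZeroDivisorElem t})
    (hab : (zdGraph S).Adj a b)
    (hs : (zdGraph S).neighborSet s = {a, b})
    (hd : (zdGraph S).dist s z = 3) :
    ∀ x ∈ ({0, (a : S), (b : S)} : Set S), ∀ t : S,
      x * t ∈ ({0, (a : S), (b : S)} : Set S) := by
  intro x hx t
  rcases hx with rfl | rfl | rfl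
  · exact Or.inl (hz t)
  · rcases key hz a b s z hs hd t with h | h | h <;> simp [h]
  · have hs' : (zdGraph S).neighborSet s = {b, a} := by rw [hs, Set.pair_comm]
    rcases key hz b a s z hs' hd t with h | h | h <;> simp [h]
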